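/- Let F be a differential field with field of constants C of characteristic zero, and let K(∂) be an ℓ×ℓ matrix differential operator of order N over F with invertible leading coefficient, such that the C-vector space ker(K(∂)) ⊆ F^ℓ has dimension Nℓ. If P(∂) is an m×ℓ matrix differential operator over F of order at most N−1 such that P(∂)F = 0 for every F ∈ ker(K(∂)), then P(∂) = 0. -/

import Mathlib

/-- Application of a matrix differential operator `K(∂) = Σ_{n<M} K_n ∂^n`
(given by its coefficients `K : Fin M → Matrix (Fin m) (Fin ℓ) F`) to a vector. -/
def applyOp {F : Type} [Field F] (d : F → F) {ℓ m M : ℕ}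
    (K : Fin M → Matrix (Fin m) (Fin ℓ) F) (v : Fin ℓ → F) : Fin m → F :=
  fun i => ∑ n : Fin M, ∑ j, K n i j * d^[(n : ℕ)] (v j)

/-- Let `F` be a differential field with constants `C` of characteristic
zero, and `K(∂)` an ℓ×ℓ matrix differential operator of order `N` over `F` with
invertible leading coefficient whose kernel in `F^ℓ` has `C`-dimension `Nℓ`
(i.e. admits a `C`-basis `Fb` of `Nℓ` solutions).  If `P(∂)` is an `m×ℓ` matrix
differential operator of order `≤ N−1` annihilating `ker K(∂)`, then `P(∂) = 0`. -/
theorem stmt_4 {F : Type} [Field F] [CharZero F] (d : F → F)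
    (hd_add : ∀ a b, d (a + b) = d a + d b)
    (hd_mul : ∀ a b, d (a * b) = d a * b + a * d b)
    (ℓ m N : ℕ)
    (K : Fin (N + 1) → Matrix (Fin ℓ) (Fin ℓ) F)
    (hKN : IsUnit (K (Fin.last N)))
    (Fb : Fin (N * ℓ) → Fin ℓ → F)
    (hsol : ∀ s, applyOp d K (Fb s) = 0)
    (hindep : ∀ c : Fin (N * ℓ) → F, (∀ s, d (c s) = 0) →
      (∀ i, ∑ s, c s * Fb s i = 0) → c = 0)
    (hspan : ∀ v : Fin ℓ → F, applyOp d K v = 0 →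
      ∃ c : Fin (N * ℓ) → F, (∀ s, d (c s) = 0) ∧ ∀ i, v i = ∑ s, c s * Fb s i)
    (P : Fin N → Matrix (Fin m) (Fin ℓ) F)
    (hP : ∀ v : Fin ℓ → F, applyOp d K v = 0 → applyOp d P v = 0) :
    ∀ n, P n = 0 := by
  classical
  -- Basic facts about the derivation
  have hd0 : d 0 = 0 := by
    have h := hd_add 0 0
    simp only [add_zero] at h
    linear_combination -h
  have hd1 : d 1 = 0 := by
    have h := hd_mul 1 1
    simp only [mul_one, one_mul] at h
    linear_combination -h
  have hdsum : ∀ (s : Finset (Fin (N * ℓ))) (f : Fin (N * ℓ) → F),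
      d (∑ i ∈ s, f i) = ∑ i ∈ s, d (f i) := by
    intro s f
    induction s using Finset.induction_on with
    | empty => simpa using hd0
    | insert _ _ h ih => rw [Finset.sum_insert h, hd_add, ih, Finset.sum_insert h]
  -- Step 1: a relation of order < N among the solutions extends to order N,
  -- thanks to the invertibility of the leading coefficient.
  have extend : ∀ b : Fin (N * ℓ) → F,
      (∀ (n : Fin N) (j : Fin ℓ), ∑ s, b s * d^[(n : ℕ)] (Fb s j) = 0) →
      ∀ j, ∑ s, b s * d^[N] (Fb s j) = 0 := by
    intro b hb
    set u : Fin ℓ → F := fun j => ∑ s, b s * d^[N] (Fb s j) with hu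
    have hKu : ∀ i, ∑ j', K (Fin.last N) i j' * u j' = 0 := by
      intro i
      have h1 : ∀ s, ∑ j', K (Fin.last N) i j' * d^[N] (Fb s j')
          = - ∑ n : Fin N, ∑ j', K n.castSucc i j' * d^[(n : ℕ)] (Fb s j') := by
        intro s
        have h0 := congrFun (hsol s) i
        simp only [applyOp, Pi.zero_apply] at h0
        rw [Fin.sum_univ_castSucc] at h0
        simp only [Fin.coe_castSucc, Fin.val_last] at h0
        linear_combination h0
      have swap : ∑ j', K (Fin.last N) i j' * u j'
          = ∑ s, b s * ∑ j', K (Fin.last N) i j' * d^[N] (Fb s j') := by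
        simp only [hu, Finset.mul_sum]
        rw [Finset.sum_comm]
        apply Finset.sum_congr rfl; intro s _
        apply Finset.sum_congr rfl; intro j' _
        ring
      rw [swap]
      have : ∀ s, b s * ∑ j', K (Fin.last N) i j' * d^[N] (Fb s j')
          = - (b s * ∑ n : Fin N, ∑ j', K n.castSucc i j' * d^[(n : ℕ)] (Fb s j')) := by
        intro s; rw [h1 s]; ring
      rw [Finset.sum_congr rfl (fun s _ => this s), Finset.sum_neg_distrib]
      rw [neg_eq_zero]
      have : (∑ s, b s * ∑ n : Fin N, ∑ j', K n.castSucc i j' * d^[(n : ℕ)] (Fb s j'))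
          = ∑ n : Fin N, ∑ j', K n.castSucc i j' * ∑ s, b s * d^[(n : ℕ)] (Fb s j') := by
        simp only [Finset.mul_sum]
        rw [Finset.sum_comm]
        apply Finset.sum_congr rfl; intro n _
        rw [Finset.sum_comm]
        apply Finset.sum_congr rfl; intro j' _
        apply Finset.sum_congr rfl; intro s _
        ring
      rw [this]
      apply Finset.sum_eq_zero; intro n _
      apply Finset.sum_eq_zero; intro j' _
      have := hb n j'
      rw [this]; ring
    -- invert the leading coefficient
    have hdet : IsUnit (K (Fin.last N)).det := (Matrix.isUnit_iff_isUnit_det _).mp hKN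
    have hmv : (K (Fin.last N)).mulVec u = 0 := by
      funext i
      simpa [Matrix.mulVec, dotProduct] using hKu i
    have hu0 : u = 0 := by
      have h := congrArg (fun w => (K (Fin.last N))⁻¹.mulVec w) hmv
      simpa [Matrix.mulVec_mulVec, Matrix.nonsing_inv_mul _ hdet] using h
    intro j
    exact congrFun hu0 j
  -- Step 2: differentiating a relation gives a relation for the derivatives of coeffs.
  have step : ∀ b : Fin (N * ℓ) → F,
      (∀ (n : Fin N) (j : Fin ℓ), ∑ s, b s * d^[(n : ℕ)] (Fb s j) = 0) →
      ∀ (n : Fin N) (j : Fin ℓ), ∑ s, d (b s) * d^[(n : ℕ)] (Fb s j) = 0 := by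
    intro b hb n j
    have hA : (∑ s, b s * d^[(n : ℕ) + 1] (Fb s j)) = 0 := by
      by_cases hn : (n : ℕ) + 1 < N
      · exact hb ⟨(n : ℕ) + 1, hn⟩ j
      · have hEq : (n : ℕ) + 1 = N := le_antisymm n.isLt (not_lt.mp hn)
        rw [hEq]
        exact extend b hb j
    have hd' := congrArg d (hb n j)
    rw [hdsum, hd0] at hd'
    have expand : ∀ s, d (b s * d^[(n : ℕ)] (Fb s j))
        = d (b s) * d^[(n : ℕ)] (Fb s j) + b s * d^[(n : ℕ) + 1] (Fb s j) := by
      intro s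
      rw [hd_mul, Function.iterate_succ_apply']
    rw [Finset.sum_congr rfl (fun s _ => expand s), Finset.sum_add_distrib, hA, add_zero] at hd'
    exact hd'
  -- Step 3: the only relation among derivatives of solutions is trivial.
  have key : ∀ (k : ℕ) (b : Fin (N * ℓ) → F),
      (Finset.univ.filter (fun s => b s ≠ 0)).card ≤ k →
      (∀ (n : Fin N) (j : Fin ℓ), ∑ s, b s * d^[(n : ℕ)] (Fb s j) = 0) → b = 0 := by
    intro k
    induction k with
    | zero =>
      intro b hcard _
      funext s
      simp only [Pi.zero_apply]
      by_contra hs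
      have : s ∈ Finset.univ.filter (fun s => b s ≠ 0) := by simp [hs]
      have := Finset.card_pos.mpr ⟨s, this⟩
      omega
    | succ k ih =>
      intro b hcard hb
      by_contra hb0
      obtain ⟨s0, hs0⟩ : ∃ s0, b s0 ≠ 0 := by
        by_contra h
        push_neg at h
        exact hb0 (funext fun s => by simpa using h s)
      -- derivative relation for c s = b s0 * d (b s) - d (b s0) * b s
      have hcrel : ∀ (n : Fin N) (j : Fin ℓ),
          ∑ s, (b s0 * d (b s) - d (b s0) * b s) * d^[(n : ℕ)] (Fb s j) = 0 := by
        intro n j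
        have h1 := step b hb n j
        have h2 := hb n j
        have h3 : ∑ s, (b s0 * d (b s) - d (b s0) * b s) * d^[(n : ℕ)] (Fb s j)
            = b s0 * (∑ s, d (b s) * d^[(n : ℕ)] (Fb s j))
              - d (b s0) * (∑ s, b s * d^[(n : ℕ)] (Fb s j)) := by
          simp only [Finset.mul_sum]
          rw [← Finset.sum_sub_distrib]
          apply Finset.sum_congr rfl; intro s _; ring
        rw [h3, h1, h2]; ring
      have hccard : (Finset.univ.filter
          (fun s => (b s0 * d (b s) - d (b s0) * b s) ≠ 0)).card ≤ k := by
        have hsub : Finset.univ.filter (fun s => (b s0 * d (b s) - d (b s0) * b s) ≠ 0)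
            ⊆ (Finset.univ.filter (fun s => b s ≠ 0)).erase s0 := by
          intro s hs
          simp only [Finset.mem_filter, Finset.mem_univ, true_and] at hs
          rw [Finset.mem_erase]
          refine ⟨?_, ?_⟩
          · rintro rfl
            exact hs (by ring)
          · simp only [Finset.mem_filter, Finset.mem_univ, true_and]
            intro hbs
            exact hs (by rw [hbs, hd0]; ring)
        calc (Finset.univ.filter (fun s => (b s0 * d (b s) - d (b s0) * b s) ≠ 0)).card
            ≤ ((Finset.univ.filter (fun s => b s ≠ 0)).erase s0).card :=
              Finset.card_le_card hsub
          _ ≤ k := by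
              have hs0mem : s0 ∈ Finset.univ.filter (fun s => b s ≠ 0) := by simp [hs0]
              have := Finset.card_erase_of_mem hs0mem
              omega
      have hc0 := ih _ hccard hcrel
      -- now b s / b s0 is constant for all s
      have hb'const : ∀ s, d (b s * (b s0)⁻¹) = 0 := by
        intro s
        have hcs : b s0 * d (b s) - d (b s0) * b s = 0 := congrFun hc0 s
        have hinv : b s0 * (b s0)⁻¹ = 1 := mul_inv_cancel₀ hs0
        have hE1 : d (b s0) * (b s0)⁻¹ + b s0 * d ((b s0)⁻¹) = 0 := by
          have h := congrArg d hinv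
          rw [hd_mul, hd1] at h
          linear_combination h
        rw [hd_mul]
        linear_combination ((b s0)⁻¹)^2 * hcs + (b s0)⁻¹ * b s * hE1
          - (d (b s) * (b s0)⁻¹ + b s * d ((b s0)⁻¹)) * hinv
      have hb'rel : ∀ i, ∑ s, (b s * (b s0)⁻¹) * Fb s i = 0 := by
        intro i
        have h0 : ∑ s, b s * Fb s i = 0 := by
          by_cases hN : 0 < N
          · have := hb ⟨0, hN⟩ i
            simpa using this
          · have hNz : N = 0 := by omega
            subst hNz
            exact Finset.sum_eq_zero fun s _ => absurd s.isLt (by omega)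
        have h1 : ∑ s, (b s * (b s0)⁻¹) * Fb s i = (b s0)⁻¹ * ∑ s, b s * Fb s i := by
          simp only [Finset.mul_sum]
          apply Finset.sum_congr rfl; intro s _; ring
        rw [h1, h0, mul_zero]
      have hz := congrFun (hindep (fun s => b s * (b s0)⁻¹) hb'const hb'rel) s0
      simp only [Pi.zero_apply, mul_inv_cancel₀ hs0] at hz
      exact one_ne_zero hz
  -- Final part: the Wronskian matrix of the basis of solutions is invertible
  set e : Fin N × Fin ℓ ≃ Fin (N * ℓ) := finProdFinEquiv with he
  set W : Matrix (Fin (N * ℓ)) (Fin (N * ℓ)) F :=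
    Matrix.of (fun s t => d^[((e.symm t).1 : ℕ)] (Fb s (e.symm t).2)) with hW
  have hdet : W.det ≠ 0 := by
    intro hdet0
    obtain ⟨v, hv, hv0⟩ := (Matrix.exists_vecMul_eq_zero_iff).mpr hdet0
    apply hv
    apply key (Finset.univ.filter (fun s => v s ≠ 0)).card v le_rfl
    intro n j
    have h := congrFun hv0 (e (n, j))
    simpa [hW, Matrix.vecMul, dotProduct] using h
  intro n
  ext i j
  have hWp : W.mulVec (fun t => P (e.symm t).1 i (e.symm t).2) = 0 := by
    funext s
    have h0 := congrFun (hP (Fb s) (hsol s)) i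
    simp only [applyOp, Pi.zero_apply] at h0
    calc W.mulVec (fun t => P (e.symm t).1 i (e.symm t).2) s
        = ∑ t, W s t * P (e.symm t).1 i (e.symm t).2 := rfl
      _ = ∑ x : Fin N × Fin ℓ, W s (e x) * P (e.symm (e x)).1 i (e.symm (e x)).2 :=
          (Equiv.sum_comp e (fun t => W s t * P (e.symm t).1 i (e.symm t).2)).symm
      _ = ∑ n' : Fin N, ∑ j' : Fin ℓ, P n' i j' * d^[(n' : ℕ)] (Fb s j') := by
          rw [Fintype.sum_prod_type]
          apply Finset.sum_congr rfl; intro n' _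
          apply Finset.sum_congr rfl; intro j' _
          simp only [hW, Equiv.symm_apply_apply, Matrix.of_apply]
          ring
      _ = 0 := h0
  have hp0 : (fun t => P (e.symm t).1 i (e.symm t).2) = 0 := by
    by_contra hp0
    exact hdet ((Matrix.exists_mulVec_eq_zero_iff).mp ⟨_, hp0, hWp⟩)
  have h := congrFun hp0 (e (n, j))
  simpa using h
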